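/- arXiv:1905.09943 — 2 statements merged into one kernel-verified Lean document; each statement's English description precedes it below -/
import Mathlib

section
/- Let α > 0 and let x₁ ≥ x₂ ≥ ... ≥ x_k be non-negative integers in decreasing order with x₁ > 0, and let k' ≤ k be the largest index with x_{k'} > 0. Then pGam(α, ∑_{l=1}^k x_l) ≥ (∏_{l=1}^k pGam(α, x_l)) · (∏_{l=1}^{k'-1} (1 + x_l/α)). -/
/-- `pGam α x = Γ(x+α)/Γ(α)`. -/
noncomputable def pGam (α : ℝ) (x : ℕ) : ℝ := Real.Gamma (x + α) / Real.Gamma α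

lemma pGam_eq_prod (α : ℝ) (hα : 0 < α) (x : ℕ) :
    pGam α x = ∏ i ∈ Finset.range x, (α + i) := by
  induction x with
  | zero => simp [pGam, div_self (Real.Gamma_pos_of_pos hα).ne']
  | succ n ih =>
    rw [Finset.prod_range_succ, ← ih, pGam, pGam]
    have h : ((n + 1 : ℕ) : ℝ) + α = (↑n + α) + 1 := by push_cast; ring
    rw [h, Real.Gamma_add_one (by positivity)]
    ring

lemma pGam_pos (α : ℝ) (hα : 0 < α) (x : ℕ) : 0 < pGam α x := by
  rw [pGam_eq_prod α hα]
  exact Finset.prod_pos fun i _ => by positivity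

lemma pGam_add_ge (α : ℝ) (hα : 0 < α) (a b : ℕ) (hb : 0 < b) :
    pGam α (a + b) ≥ pGam α a * pGam α b * (1 + a / α) := by
  obtain ⟨m, rfl⟩ : ∃ m, b = m + 1 := ⟨b - 1, by omega⟩
  have hsplit : pGam α (a + (m + 1)) =
      pGam α a * ∏ i ∈ Finset.range (m + 1), (α + (↑(a + i) : ℝ)) := by
    rw [pGam_eq_prod α hα (a + (m + 1)), Finset.prod_range_add, pGam_eq_prod α hα]
  have h2 : pGam α (m + 1) * (1 + (a:ℝ) / α) ≤
      ∏ i ∈ Finset.range (m + 1), (α + (↑(a + i) : ℝ)) := by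
    rw [pGam_eq_prod α hα,
      Finset.prod_range_succ' (fun i => (α + (↑(a + i) : ℝ))) m,
      Finset.prod_range_succ' (fun i => (α + (i : ℝ))) m]
    have key : ∏ i ∈ Finset.range m, (α + (↑(i + 1) : ℝ)) ≤
        ∏ i ∈ Finset.range m, (α + (↑(a + (i + 1)) : ℝ)) := by
      apply Finset.prod_le_prod
      · intro i _; positivity
      · intro i _
        push_cast
        linarith [Nat.cast_nonneg (α := ℝ) a]
    have hc : (α + ((0:ℕ):ℝ)) * (1 + (a:ℝ) / α) = α + ((a + 0 : ℕ):ℝ) := by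
      push_cast
      field_simp
      ring
    calc (∏ i ∈ Finset.range m, (α + (↑(i + 1) : ℝ))) * (α + ((0:ℕ):ℝ)) *
          (1 + (a:ℝ) / α)
        = (∏ i ∈ Finset.range m, (α + (↑(i + 1) : ℝ))) *
            ((α + ((0:ℕ):ℝ)) * (1 + (a:ℝ) / α)) := by ring
      _ = (∏ i ∈ Finset.range m, (α + (↑(i + 1) : ℝ))) * (α + ((a + 0 : ℕ):ℝ)) := by
          rw [hc]
      _ ≤ (∏ i ∈ Finset.range m, (α + (↑(a + (i + 1)) : ℝ))) * (α + ((a + 0 : ℕ):ℝ)) := by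
          have hpos : (0:ℝ) ≤ α + ((a + 0 : ℕ):ℝ) := by positivity
          exact mul_le_mul_of_nonneg_right key hpos
  have hga : (0:ℝ) ≤ pGam α a := (pGam_pos α hα a).le
  calc pGam α a * pGam α (m + 1) * (1 + (a:ℝ) / α)
      = pGam α a * (pGam α (m + 1) * (1 + (a:ℝ) / α)) := by ring
    _ ≤ pGam α a * ∏ i ∈ Finset.range (m + 1), (α + (↑(a + i) : ℝ)) :=
        mul_le_mul_of_nonneg_left h2 hga
    _ = pGam α (a + (m + 1)) := hsplit.symm

/-- Counts `x 0 ≥ x 1 ≥ ... ≥ x (k-1)` (0-based) in decreasing order with `x 0 > 0`,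
and `k'` the (0-based) largest index with a positive count. -/
theorem stmt_3 (α : ℝ) (hα : 0 < α) (k : ℕ) (x : ℕ → ℕ) (k' : ℕ)
    (hdec : ∀ i j, i ≤ j → j < k → x j ≤ x i)
    (h1 : 0 < x 0) (hk' : k' < k) (hk'pos : 0 < x k')
    (hk'max : ∀ l, k' < l → l < k → x l = 0) :
    pGam α (∑ l ∈ Finset.range k, x l) ≥
      (∏ l ∈ Finset.range k, pGam α (x l)) *
        ∏ l ∈ Finset.range k', (1 + (x l : ℝ) / α) := by
  have main : ∀ m, m ≤ k → 1 ≤ m →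
      pGam α (∑ l ∈ Finset.range m, x l) ≥
        (∏ l ∈ Finset.range m, pGam α (x l)) *
          ∏ l ∈ Finset.range (min (m - 1) k'), (1 + (x l : ℝ) / α) := by
    intro m
    induction m with
    | zero => omega
    | succ n ih =>
      intro hmk _
      rcases Nat.eq_zero_or_pos n with rfl | hn
      · simp
      have ihn := ih (by omega) hn
      by_cases hcase : n ≤ k'
      · -- x n ≥ 1, use the key lemma
        have hxn : 0 < x n := lt_of_lt_of_le hk'pos (hdec n k' hcase hk')
        have hS : x (n - 1) ≤ ∑ l ∈ Finset.range n, x l :=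
          Finset.single_le_sum (f := x) (fun i _ => Nat.zero_le _)
            (Finset.mem_range.mpr (by omega))
        have hbound : (1 + (x (n - 1) : ℝ) / α) ≤
            (1 + (↑(∑ l ∈ Finset.range n, x l) : ℝ) / α) := by
          have : ((x (n-1) : ℕ) : ℝ) ≤ ((∑ l ∈ Finset.range n, x l : ℕ) : ℝ) :=
            Nat.cast_le.mpr hS
          gcongr
        have key := pGam_add_ge α hα (∑ l ∈ Finset.range n, x l) (x n) hxn
        have hmin1 : min (n + 1 - 1) k' = n := by omega
        have hmin2 : min (n - 1) k' = n - 1 := by omega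
        rw [hmin2] at ihn
        have hn' : n = (n - 1) + 1 := by omega
        have hbon : ∏ l ∈ Finset.range n, (1 + (x l : ℝ) / α) =
            (∏ l ∈ Finset.range (n - 1), (1 + (x l : ℝ) / α)) *
              (1 + (x (n - 1) : ℝ) / α) := by
          conv_lhs => rw [hn']
          rw [Finset.prod_range_succ]
        rw [Finset.sum_range_succ, Finset.prod_range_succ, hmin1, hbon]
        have hpos1 : (0:ℝ) < pGam α (x n) := pGam_pos α hα _
        have hpos2 : (0:ℝ) < 1 + (x (n - 1) : ℝ) / α := by positivity
        have hpos3 : (0:ℝ) ≤ ∏ l ∈ Finset.range (n-1), (1 + (x l : ℝ) / α) :=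
          Finset.prod_nonneg fun i _ => by positivity
        have hpg : (0:ℝ) < ∏ l ∈ Finset.range n, pGam α (x l) :=
          Finset.prod_pos fun i _ => pGam_pos α hα _
        have hS0 : (0:ℝ) < pGam α (∑ l ∈ Finset.range n, x l) :=
          pGam_pos α hα _
        calc pGam α (∑ l ∈ Finset.range n, x l + x n)
            ≥ pGam α (∑ l ∈ Finset.range n, x l) * pGam α (x n) *
              (1 + (↑(∑ l ∈ Finset.range n, x l) : ℝ) / α) := key
          _ ≥ ((∏ l ∈ Finset.range n, pGam α (x l)) *
                ∏ l ∈ Finset.range (n-1), (1 + (x l : ℝ) / α)) * pGam α (x n) *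
              (1 + (x (n - 1) : ℝ) / α) := by
              gcongr
          _ = (∏ l ∈ Finset.range n, pGam α (x l)) * pGam α (x n) *
              ((∏ l ∈ Finset.range (n-1), (1 + (x l : ℝ) / α)) *
                (1 + (x (n - 1) : ℝ) / α)) := by ring
      · -- n > k', x n = 0
        have hxn : x n = 0 := hk'max n (by omega) (by omega)
        have hmin1 : min (n + 1 - 1) k' = k' := by omega
        have hmin2 : min (n - 1) k' = k' := by omega
        rw [Finset.sum_range_succ, Finset.prod_range_succ, hxn, hmin1]
        rw [hmin2] at ihn
        have h0 : pGam α 0 = 1 := by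
          simp [pGam, div_self (Real.Gamma_pos_of_pos hα).ne']
        simpa [h0] using ihn
  have := main k (le_refl k) (by omega)
  rwa [Nat.min_eq_right (by omega : k' ≤ k - 1)] at this
end

section
/- Let q ≥ 1, α > 0, and let n^{(1)}, ..., n^{(w)} be count vectors in ℕ^q each with positive total, and let n = ∑_{t=1}^w n^{(t)} componentwise. Then for any index t* ∈ {1,...,w}: llB(n, α) ≤ llB(n^{(t*)}, α) + ∑_{t ≠ t*} ML(n^{(t)}), where llB(m, α) = -log pGam(α, ∑_k m_k) + ∑_k log pGam(α/q, m_k) and ML(m) = ∑_k m_k log(m_k/∑_l m_l). -/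
/-- Local local BDeu score of a count vector `m` (over `q` categories). -/
noncomputable def llB (q : ℕ) (α : ℝ) (m : ℕ → ℕ) : ℝ :=
  -Real.log (pGam α (∑ k ∈ Finset.range q, m k)) +
    ∑ k ∈ Finset.range q, Real.log (pGam (α / q) (m k))

/-- Maximized multinomial log-likelihood (with `0 · log 0 = 0`). -/
noncomputable def ML (q : ℕ) (m : ℕ → ℕ) : ℝ :=
  ∑ k ∈ Finset.range q,
    (m k : ℝ) * Real.log ((m k : ℝ) / ((∑ l ∈ Finset.range q, m l : ℕ) : ℝ))




noncomputable def rising (x : ℝ) (b : ℕ) : ℝ := ∏ j ∈ Finset.range b, (x + j)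

lemma rising_zero (x : ℝ) : rising x 0 = 1 := by simp [rising]

lemma rising_succ (x : ℝ) (b : ℕ) : rising x (b+1) = rising x b * (x + b) := by
  simp [rising, Finset.prod_range_succ]

lemma rising_pos {x : ℝ} (hx : 0 < x) (b : ℕ) : 0 < rising x b := by
  apply Finset.prod_pos
  intro j _
  positivity

lemma rising_add (x : ℝ) (a b : ℕ) : rising x (a + b) = rising x a * rising (x + a) b := by
  induction b with
  | zero => simp [rising_zero]
  | succ b ih =>
    rw [← Nat.add_assoc, rising_succ, ih, rising_succ]
    push_cast
    ring

lemma Gamma_eq_rising_mul {x : ℝ} (hx : 0 < x) (b : ℕ) :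
    Real.Gamma (x + b) = rising x b * Real.Gamma x := by
  induction b with
  | zero => simp [rising_zero]
  | succ b ih =>
    have : x + ((b:ℝ)+1) = (x + b) + 1 := by ring
    push_cast
    rw [this, Real.Gamma_add_one (by positivity), ih, rising_succ]
    ring

lemma pGam_eq_rising {α : ℝ} (hα : 0 < α) (b : ℕ) : pGam α b = rising α b := by
  rw [pGam, add_comm, Gamma_eq_rising_mul hα, mul_div_assoc, div_self (Real.Gamma_pos_of_pos hα).ne', mul_one]

noncomputable def rBeta (x y : ℝ) : ℝ :=
  ∫ t in (0:ℝ)..1, t ^ (x-1) * (1-t) ^ (y-1)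

lemma complex_integrand_eq {x y : ℝ} {t : ℝ} (h0 : 0 ≤ t) (h1 : t ≤ 1) :
    (t:ℂ) ^ ((x:ℂ)-1) * ((1:ℂ)-t) ^ ((y:ℂ)-1)
      = ((t ^ (x-1) * (1-t) ^ (y-1) : ℝ) : ℂ) := by
  rw [Complex.ofReal_mul, Complex.ofReal_cpow h0, Complex.ofReal_cpow (by linarith)]
  push_cast
  ring_nf

lemma betaIntegral_ofReal {x y : ℝ} (hx : 0 < x) (hy : 0 < y) :
    Complex.betaIntegral x y = ((rBeta x y : ℝ) : ℂ) := by
  have h1 : (∫ t in (0:ℝ)..1, (t:ℂ) ^ ((x:ℂ)-1) * ((1:ℂ)-t) ^ ((y:ℂ)-1))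
      = ∫ t in (0:ℝ)..1, ((t ^ (x-1) * (1-t) ^ (y-1) : ℝ) : ℂ) := by
    apply intervalIntegral.integral_congr
    intro t ht
    rw [Set.uIcc_of_le (by norm_num)] at ht
    exact complex_integrand_eq ht.1 ht.2
  rw [Complex.betaIntegral, h1, rBeta]
  exact RCLike.intervalIntegral_ofReal

lemma Gamma_mul_Gamma_eq_rBeta {x y : ℝ} (hx : 0 < x) (hy : 0 < y) :
    Real.Gamma x * Real.Gamma y = Real.Gamma (x+y) * rBeta x y := by
  have h := Complex.Gamma_mul_Gamma_eq_betaIntegral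
    (s := (x:ℂ)) (t := (y:ℂ)) (by simpa using hx) (by simpa using hy)
  rw [betaIntegral_ofReal hx hy] at h
  have : ((x:ℂ) + y) = ((x + y : ℝ) : ℂ) := by push_cast; ring
  rw [this, Complex.Gamma_ofReal, Complex.Gamma_ofReal, Complex.Gamma_ofReal] at h
  exact_mod_cast h

lemma rBeta_integrable {x y : ℝ} (hx : 0 < x) (hy : 0 < y) :
    IntervalIntegrable (fun t : ℝ => t ^ (x-1) * (1-t) ^ (y-1)) MeasureTheory.volume 0 1 := by
  have hC := Complex.betaIntegral_convergent (u := (x:ℂ)) (v := (y:ℂ))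
    (by simpa using hx) (by simpa using hy)
  rw [intervalIntegrable_iff_integrableOn_Ioc_of_le (by norm_num)] at hC ⊢
  have h2 := hC.re
  apply MeasureTheory.IntegrableOn.congr_fun h2 ?_ measurableSet_Ioc
  intro t ht
  simp only [Function.comp]
  rw [complex_integrand_eq ht.1.le ht.2]
  simp

-- t^b1 (1-t)^b2 * B^B ≤ b1^b1 * b2^b2  for t ∈ [0,1]
lemma pointwise_amgm (b1 b2 : ℕ) {t : ℝ} (h0 : 0 ≤ t) (h1 : t ≤ 1) :
    t ^ b1 * (1-t) ^ b2 * ((b1:ℝ)+b2) ^ (b1+b2) ≤ (b1:ℝ) ^ b1 * (b2:ℝ) ^ b2 := by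
  have h1t : 0 ≤ 1 - t := by linarith
  rcases Nat.eq_zero_or_pos b1 with hb1 | hb1
  · subst hb1
    simp only [pow_zero, Nat.cast_zero, one_mul, zero_add, mul_one]
    calc (1-t) ^ b2 * (b2:ℝ) ^ b2 ≤ 1 * (b2:ℝ) ^ b2 := by
          apply mul_le_mul_of_nonneg_right _ (by positivity)
          exact pow_le_one₀ h1t (by linarith)
      _ = (b2:ℝ) ^ b2 := one_mul _
  rcases Nat.eq_zero_or_pos b2 with hb2 | hb2
  · subst hb2
    simp only [pow_zero, Nat.cast_zero, mul_one, add_zero]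
    calc t ^ b1 * ((b1:ℝ)) ^ b1 ≤ 1 * (b1:ℝ) ^ b1 := by
          apply mul_le_mul_of_nonneg_right _ (by positivity)
          exact pow_le_one₀ h0 h1
      _ = (b1:ℝ) ^ b1 := one_mul _
  -- main case
  set B : ℝ := (b1:ℝ) + b2 with hB
  have hBpos : 0 < B := by positivity
  have hw1 : (0:ℝ) ≤ (b1:ℝ)/B := by positivity
  have hw2 : (0:ℝ) ≤ (b2:ℝ)/B := by positivity
  have hsum : (b1:ℝ)/B + (b2:ℝ)/B = 1 := by field_simp; linarith
  have hb1' : (0:ℝ) < b1 := by exact_mod_cast hb1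
  have hb2' : (0:ℝ) < b2 := by exact_mod_cast hb2
  have hp1 : (0:ℝ) ≤ t * B / b1 := by positivity
  have hp2 : (0:ℝ) ≤ (1-t) * B / b2 := by positivity
  have key := Real.geom_mean_le_arith_mean2_weighted hw1 hw2 hp1 hp2 hsum
  have hrhs : (b1:ℝ)/B * (t * B / b1) + (b2:ℝ)/B * ((1-t) * B / b2) = 1 := by
    field_simp
    ring
  rw [hrhs] at key
  -- key : (t*B/b1)^(b1/B) * ((1-t)*B/b2)^(b2/B) ≤ 1
  have key2 : ((t * B / b1) ^ ((b1:ℝ)/B) * ((1-t) * B / b2) ^ ((b2:ℝ)/B)) ^ B ≤ 1 := by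
    calc _ ≤ (1:ℝ) ^ B := Real.rpow_le_rpow (by positivity) key hBpos.le
      _ = 1 := Real.one_rpow B
  rw [Real.mul_rpow (by positivity) (by positivity)] at key2
  rw [← Real.rpow_mul hp1, ← Real.rpow_mul hp2, div_mul_cancel₀ _ hBpos.ne',
    div_mul_cancel₀ _ hBpos.ne', Real.rpow_natCast, Real.rpow_natCast] at key2
  -- key2 : (t*B/b1)^b1 * ((1-t)*B/b2)^b2 ≤ 1
  have expand : (t * B / b1) ^ b1 * ((1-t) * B / b2) ^ b2
      = (t ^ b1 * (1-t) ^ b2 * B ^ (b1+b2)) / ((b1:ℝ) ^ b1 * (b2:ℝ) ^ b2) := by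
    rw [div_pow, div_pow, mul_pow, mul_pow, pow_add]
    field_simp
  rw [expand, div_le_one (by positivity)] at key2
  exact key2

-- helper: u^(x+b-1) = u^(x-1) * u^b for u ≥ 0, x > 0 (rpow/npow mix)
lemma rpow_split {u x : ℝ} (hu : 0 ≤ u) (hx : 0 < x) (b : ℕ) :
    u ^ (x + b - 1) = u ^ (x - 1) * u ^ b := by
  rcases eq_or_lt_of_le hu with h | h
  · rcases Nat.eq_zero_or_pos b with hb | hb
    · subst hb; simp
    · have hbR : (1:ℝ) ≤ b := by exact_mod_cast hb
      rw [← h, Real.zero_rpow (ne_of_gt (by nlinarith : (0:ℝ) < x + b - 1)),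
        zero_pow hb.ne', mul_zero]
  · rw [← Real.rpow_natCast u b, ← Real.rpow_add h]
    ring_nf

lemma rBeta_le {x1 x2 : ℝ} (h1 : 0 < x1) (h2 : 0 < x2) (b1 b2 : ℕ) (hB : 0 < b1 + b2) :
    rBeta (x1 + b1) (x2 + b2) * ((b1:ℝ)+b2) ^ (b1+b2)
      ≤ rBeta x1 x2 * ((b1:ℝ) ^ b1 * (b2:ℝ) ^ b2) := by
  have hBR : (0:ℝ) < (b1:ℝ) + b2 := by exact_mod_cast hB
  rw [rBeta, rBeta, ← intervalIntegral.integral_mul_const, ← intervalIntegral.integral_mul_const]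
  apply intervalIntegral.integral_mono_ae_restrict (by norm_num)
  · exact (rBeta_integrable (by positivity) (by positivity)).mul_const _
  · exact (rBeta_integrable h1 h2).mul_const _
  · have hsub : {t : ℝ | ¬ (t ^ (x1 + b1 - 1) * (1-t) ^ (x2 + b2 - 1) * (((b1:ℝ)+b2) ^ (b1+b2))
        ≤ t ^ (x1-1) * (1-t) ^ (x2-1) * ((b1:ℝ) ^ b1 * (b2:ℝ) ^ b2))} ∩ Set.Icc (0:ℝ) 1 ⊆ {0} := by
      intro t ⟨hviol, ht0, ht1⟩
      by_contra htne
      apply hviol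
      have htpos : 0 < t := lt_of_le_of_ne ht0 (Ne.symm htne)
      have h1t : 0 ≤ 1 - t := by linarith
      rw [rpow_split htpos.le h1 b1, rpow_split h1t h2 b2]
      calc t ^ (x1-1) * t ^ b1 * ((1-t) ^ (x2-1) * (1-t) ^ b2) * ((b1:ℝ)+b2) ^ (b1+b2)
          = (t ^ b1 * (1-t) ^ b2 * ((b1:ℝ)+b2) ^ (b1+b2)) * (t ^ (x1-1) * (1-t) ^ (x2-1)) := by
            ring
        _ ≤ ((b1:ℝ) ^ b1 * (b2:ℝ) ^ b2) * (t ^ (x1-1) * (1-t) ^ (x2-1)) := by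
            apply mul_le_mul_of_nonneg_right (pointwise_amgm b1 b2 ht0 ht1) (by positivity)
        _ = t ^ (x1-1) * (1-t) ^ (x2-1) * ((b1:ℝ) ^ b1 * (b2:ℝ) ^ b2) := by ring
    rw [Filter.EventuallyLE, MeasureTheory.ae_restrict_iff' measurableSet_Icc]
    have hnull : MeasureTheory.volume ({t : ℝ | ¬ (t ^ (x1 + b1 - 1) * (1-t) ^ (x2 + b2 - 1) * (((b1:ℝ)+b2) ^ (b1+b2))
        ≤ t ^ (x1-1) * (1-t) ^ (x2-1) * ((b1:ℝ) ^ b1 * (b2:ℝ) ^ b2))} ∩ Set.Icc (0:ℝ) 1) = 0 :=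
      MeasureTheory.measure_mono_null hsub (MeasureTheory.measure_singleton 0)
    rw [MeasureTheory.ae_iff]
    apply MeasureTheory.measure_mono_null _ hnull
    intro t ht
    simp only [Set.mem_setOf_eq, not_forall] at ht
    obtain ⟨htIcc, hv⟩ := ht
    exact ⟨hv, htIcc⟩

lemma key2 {x1 x2 : ℝ} (h1 : 0 < x1) (h2 : 0 < x2) (b1 b2 : ℕ) :
    rising x1 b1 * rising x2 b2 * (((b1:ℝ)+b2) ^ (b1+b2))
      ≤ rising (x1+x2) (b1+b2) * ((b1:ℝ) ^ b1 * (b2:ℝ) ^ b2) := by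
  rcases Nat.eq_zero_or_pos (b1+b2) with hB | hB
  · have hb1 : b1 = 0 := by omega
    have hb2 : b2 = 0 := by omega
    subst hb1; subst hb2; simp [rising_zero]
  have hG1 : 0 < Real.Gamma x1 := Real.Gamma_pos_of_pos h1
  have hG2 : 0 < Real.Gamma x2 := Real.Gamma_pos_of_pos h2
  have hGX : 0 < Real.Gamma (x1+x2) := Real.Gamma_pos_of_pos (by linarith)
  have hX : (0:ℝ) < x1 + x2 := by linarith
  have e1 := Gamma_mul_Gamma_eq_rBeta (x := x1+(b1:ℝ)) (y := x2+(b2:ℝ)) (by positivity) (by positivity)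
  have e2 := Gamma_mul_Gamma_eq_rBeta h1 h2
  rw [Gamma_eq_rising_mul h1 b1, Gamma_eq_rising_mul h2 b2] at e1
  have hsum : x1 + (b1:ℝ) + (x2 + (b2:ℝ)) = (x1+x2) + ((b1+b2 : ℕ):ℝ) := by push_cast; ring
  rw [hsum, Gamma_eq_rising_mul hX (b1+b2)] at e1
  have hβ := rBeta_le h1 h2 b1 b2 hB
  have hRX : 0 < rising (x1+x2) (b1+b2) * Real.Gamma (x1+x2) :=
    mul_pos (rising_pos hX _) hGX
  have hmono := mul_le_mul_of_nonneg_left hβ hRX.le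
  have step1 : rising x1 b1 * rising x2 b2 * (((b1:ℝ)+b2) ^ (b1+b2)) * (Real.Gamma x1 * Real.Gamma x2)
      = rising (x1+x2) (b1+b2) * Real.Gamma (x1+x2) *
        (rBeta (x1+(b1:ℝ)) (x2+(b2:ℝ)) * (((b1:ℝ)+b2) ^ (b1+b2))) := by
    linear_combination (((b1:ℝ)+b2) ^ (b1+b2)) * e1
  have step2 : rising (x1+x2) (b1+b2) * Real.Gamma (x1+x2) *
        (rBeta x1 x2 * ((b1:ℝ) ^ b1 * (b2:ℝ) ^ b2))
      = rising (x1+x2) (b1+b2) * ((b1:ℝ) ^ b1 * (b2:ℝ) ^ b2) * (Real.Gamma x1 * Real.Gamma x2) := by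
    linear_combination rising (x1+x2) (b1+b2) * ((b1:ℝ) ^ b1 * (b2:ℝ) ^ b2) * e2.symm
  have final : rising x1 b1 * rising x2 b2 * (((b1:ℝ)+b2) ^ (b1+b2)) * (Real.Gamma x1 * Real.Gamma x2)
      ≤ rising (x1+x2) (b1+b2) * ((b1:ℝ) ^ b1 * (b2:ℝ) ^ b2) * (Real.Gamma x1 * Real.Gamma x2) := by
    rw [step1, ← step2]
    exact hmono
  exact le_of_mul_le_mul_right final (mul_pos hG1 hG2)

lemma keyq (q : ℕ) (x : ℕ → ℝ) (b : ℕ → ℕ) (hx : ∀ k < q, 0 < x k) :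
    (∏ k ∈ Finset.range q, rising (x k) (b k)) *
        (((∑ k ∈ Finset.range q, b k : ℕ):ℝ) ^ (∑ k ∈ Finset.range q, b k))
      ≤ rising (∑ k ∈ Finset.range q, x k) (∑ k ∈ Finset.range q, b k) *
        ∏ k ∈ Finset.range q, ((b k : ℝ)) ^ (b k) := by
  induction q with
  | zero => simp [rising_zero]
  | succ q ih =>
    rcases Nat.eq_zero_or_pos q with hq0 | hq0
    · subst hq0; simp
    have hx' : ∀ k < q, 0 < x k := fun k hk => hx k (by omega)
    have hX1 : 0 < ∑ k ∈ Finset.range q, x k :=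
      Finset.sum_pos (fun k hk => hx' k (Finset.mem_range.mp hk))
        (Finset.nonempty_range_iff.mpr (by omega))
    set B1 := ∑ k ∈ Finset.range q, b k with hB1
    have hkey := key2 hX1 (hx q (by omega)) B1 (b q)
    have ihq := ih hx'
    rw [Finset.prod_range_succ, Finset.prod_range_succ, Finset.sum_range_succ,
      Finset.sum_range_succ (f := fun k => x k)]
    have hB1pow : (0:ℝ) < ((B1:ℕ):ℝ) ^ B1 := by
      rcases Nat.eq_zero_or_pos B1 with h | h
      · rw [h]; norm_num
      · have : (0:ℝ) < (B1:ℝ) := by exact_mod_cast h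
        positivity
    have hc : 0 < rising (∑ k ∈ Finset.range q, x k) B1 * ((B1:ℕ):ℝ) ^ B1 :=
      mul_pos (rising_pos hX1 _) hB1pow
    have hPn : (0:ℝ) ≤ ∏ k ∈ Finset.range q, rising (x k) (b k) :=
      Finset.prod_nonneg (fun k hk => (rising_pos (hx' k (Finset.mem_range.mp hk)) _).le)
    have hMn : (0:ℝ) ≤ ∏ k ∈ Finset.range q, ((b k : ℝ)) ^ (b k) :=
      Finset.prod_nonneg (fun k _ => by positivity)
    have hprod := mul_le_mul ihq hkey
      (by
        apply mul_nonneg (mul_nonneg (rising_pos hX1 _).le (rising_pos (hx q (by omega)) _).le)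
        positivity)
      (mul_nonneg (rising_pos hX1 _).le hMn)
    apply le_of_mul_le_mul_right _ hc
    calc (∏ k ∈ Finset.range q, rising (x k) (b k)) * rising (x q) (b q) *
            (((B1 + b q : ℕ):ℝ) ^ (B1 + b q)) *
            (rising (∑ k ∈ Finset.range q, x k) B1 * ((B1:ℕ):ℝ) ^ B1)
        = ((∏ k ∈ Finset.range q, rising (x k) (b k)) * (((B1:ℕ):ℝ) ^ B1)) *
            (rising (∑ k ∈ Finset.range q, x k) B1 * rising (x q) (b q) *
              (((B1:ℝ) + (b q : ℝ)) ^ (B1 + b q))) := by push_cast; ring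
      _ ≤ (rising (∑ k ∈ Finset.range q, x k) B1 * ∏ k ∈ Finset.range q, ((b k : ℝ)) ^ (b k)) *
            (rising ((∑ k ∈ Finset.range q, x k) + x q) (B1 + b q) *
              (((B1:ℕ):ℝ) ^ B1 * ((b q : ℝ)) ^ (b q))) := hprod
      _ = rising ((∑ k ∈ Finset.range q, x k) + x q) (B1 + b q) *
            ((∏ k ∈ Finset.range q, ((b k : ℝ)) ^ (b k)) * ((b q : ℝ)) ^ (b q)) *
            (rising (∑ k ∈ Finset.range q, x k) B1 * ((B1:ℕ):ℝ) ^ B1) := by push_cast; ring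

lemma llB_step (q : ℕ) (hq : 1 ≤ q) (α : ℝ) (hα : 0 < α) (a b : ℕ → ℕ) :
    llB q α (fun k => a k + b k) ≤ llB q α a + ML q b := by
  have hq0 : (0:ℝ) < q := by exact_mod_cast hq
  have hαq : 0 < α / q := by positivity
  set Na := ∑ k ∈ Finset.range q, a k with hNa
  set Nb := ∑ k ∈ Finset.range q, b k with hNb
  rcases Nat.eq_zero_or_pos Nb with hNb0 | hNbpos
  · have hb0 : ∀ k ∈ Finset.range q, b k = 0 :=
      Finset.sum_eq_zero_iff.mp (hNb ▸ hNb0)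
    have h3 : ML q b = 0 := Finset.sum_eq_zero (fun k hk => by simp [hb0 k hk])
    have hsa : ∑ k ∈ Finset.range q, (a k + b k) = ∑ k ∈ Finset.range q, a k :=
      Finset.sum_congr rfl (fun k hk => by rw [hb0 k hk, Nat.add_zero])
    have h1 : llB q α (fun k => a k + b k) = llB q α a := by
      simp only [llB]
      rw [hsa]
      congr 1
      exact Finset.sum_congr rfl (fun k hk => by rw [hb0 k hk, Nat.add_zero])
    rw [h1, h3, add_zero]
  -- main case
  have hNbR : (0:ℝ) < (Nb:ℝ) := by exact_mod_cast hNbpos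
  have hx : ∀ k < q, (0:ℝ) < α/q + (a k : ℝ) := fun k _ => by positivity
  have hsumx : ∑ k ∈ Finset.range q, (α/q + (a k:ℝ)) = α + (Na:ℝ) := by
    rw [Finset.sum_add_distrib, Finset.sum_const, Finset.card_range, nsmul_eq_mul]
    push_cast [hNa]
    field_simp
  have hM := keyq q (fun k => α/q + (a k:ℝ)) b hx
  simp only [hsumx, ← hNb] at hM
  have hP : (0:ℝ) < ∏ k ∈ Finset.range q, rising (α/q + (a k:ℝ)) (b k) :=
    Finset.prod_pos (fun k hk => rising_pos (hx k (Finset.mem_range.mp hk)) _)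
  have hpow : (0:ℝ) < ((Nb:ℕ):ℝ) ^ Nb := by positivity
  have hMprod : (0:ℝ) < ∏ k ∈ Finset.range q, ((b k:ℝ)) ^ (b k) := by
    apply Finset.prod_pos
    intro k hk
    rcases Nat.eq_zero_or_pos (b k) with h | h
    · simp [h]
    · have : (0:ℝ) < (b k:ℝ) := by exact_mod_cast h
      positivity
  have hαNa : (0:ℝ) < α + (Na:ℝ) := by positivity
  have hlog := Real.log_le_log (mul_pos hP hpow) hM
  rw [Real.log_mul hP.ne' hpow.ne',
    Real.log_prod (fun k hk => (rising_pos (hx k (Finset.mem_range.mp hk)) _).ne'),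
    Real.log_pow,
    Real.log_mul (rising_pos hαNa _).ne' hMprod.ne',
    Real.log_prod (fun k hk => by
      rcases Nat.eq_zero_or_pos (b k) with h | h
      · simp [h]
      · have : (0:ℝ) < (b k:ℝ) := by exact_mod_cast h
        positivity)] at hlog
  simp only [Real.log_pow] at hlog
  -- hlog : ∑ log rising (α/q + a k) (b k) + Nb * log Nb
  --        ≤ log rising (α+Na) Nb + ∑ (b k) * log (b k)
  -- now unfold the goal
  simp only [llB, ML, pGam_eq_rising hα, pGam_eq_rising hαq]
  have hsumab : ∑ k ∈ Finset.range q, (a k + b k) = Na + Nb := by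
    rw [hNa, hNb, Finset.sum_add_distrib]
  have hsplit : ∀ k ∈ Finset.range q, Real.log (rising (α/q) (a k + b k))
      = Real.log (rising (α/q) (a k)) + Real.log (rising (α/q + (a k:ℝ)) (b k)) := by
    intro k hk
    rw [rising_add, Real.log_mul (rising_pos hαq _).ne' (rising_pos (by positivity) _).ne']
  have hlogN : Real.log (rising α (Na + Nb))
      = Real.log (rising α Na) + Real.log (rising (α + (Na:ℝ)) Nb) := by
    rw [rising_add, Real.log_mul (rising_pos hα _).ne' (rising_pos hαNa _).ne']
  have hML : ∑ k ∈ Finset.range q, (b k:ℝ) * Real.log ((b k:ℝ)/((Nb:ℕ):ℝ))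
      = (∑ k ∈ Finset.range q, (b k:ℝ) * Real.log (b k)) - (Nb:ℝ) * Real.log (Nb:ℝ) := by
    have hterm : ∀ k ∈ Finset.range q, (b k:ℝ) * Real.log ((b k:ℝ)/((Nb:ℕ):ℝ))
        = (b k:ℝ) * Real.log (b k) - (b k:ℝ) * Real.log ((Nb:ℕ):ℝ) := by
      intro k hk
      rcases Nat.eq_zero_or_pos (b k) with h | h
      · simp [h]
      · have hbk : ((b k:ℕ):ℝ) ≠ 0 := by
          have : (0:ℝ) < (b k:ℝ) := by exact_mod_cast h
          exact this.ne'
        rw [Real.log_div hbk hNbR.ne']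
        ring
    rw [Finset.sum_congr rfl hterm, Finset.sum_sub_distrib, ← Finset.sum_mul]
    congr 2
    rw [hNb]
    push_cast
    ring
  rw [hsumab, hlogN, Finset.sum_congr rfl hsplit, Finset.sum_add_distrib, hML]
  linarith [hlog]


theorem stmt_13 (q : ℕ) (hq : 1 ≤ q) (α : ℝ) (hα : 0 < α)
    (w : ℕ) (hw : 0 < w) (n : ℕ → ℕ → ℕ)
    (hpos : ∀ t ∈ Finset.range w, 0 < ∑ k ∈ Finset.range q, n t k)
    (t' : ℕ) (ht' : t' ∈ Finset.range w) :
    llB q α (fun k => ∑ t ∈ Finset.range w, n t k)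
      ≤ llB q α (n t') + ∑ t ∈ (Finset.range w).erase t', ML q (n t) := by
  have claim : ∀ T : Finset ℕ, llB q α (fun k => n t' k + ∑ t ∈ T, n t k)
      ≤ llB q α (n t') + ∑ t ∈ T, ML q (n t) := by
    intro T
    induction T using Finset.induction_on with
    | empty => simp
    | @insert a s ha ih =>
      have hfun : (fun k => n t' k + ∑ t ∈ insert a s, n t k)
          = fun k => (n t' k + ∑ t ∈ s, n t k) + n a k := by
        funext k
        rw [Finset.sum_insert ha]
        omega
      rw [hfun, Finset.sum_insert ha]
      calc llB q α (fun k => (n t' k + ∑ t ∈ s, n t k) + n a k)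
          ≤ llB q α (fun k => n t' k + ∑ t ∈ s, n t k) + ML q (n a) :=
            llB_step q hq α hα _ (n a)
        _ ≤ llB q α (n t') + ∑ t ∈ s, ML q (n t) + ML q (n a) := by linarith
        _ = llB q α (n t') + (ML q (n a) + ∑ t ∈ s, ML q (n t)) := by ring
  have heq : (fun k => ∑ t ∈ Finset.range w, n t k)
      = fun k => n t' k + ∑ t ∈ (Finset.range w).erase t', n t k := by
    funext k
    rw [← Finset.add_sum_erase _ (fun t => n t k) ht']
  rw [heq]
  exact claim _
end
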